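/- On the set A of nonunital 'infinite matrices' a: ℕ² → ℂ with sup_{i,j}(i+j)^k |a_{ij}| < ∞ for all k, the operation a ∘ b = a + b + ab (where ab is matrix multiplication (ab)_{ij} = Σ_l a_{il} b_{lj}) is well-defined (the series converges absolutely and the result lies in A) and is associative. -/

import Mathlib

set_option maxHeartbeats 1000000


open scoped BigOperators

/-- Rapid decay of an infinite matrix: `sup_{i,j} (i+j)^k |a_{ij}| < ∞` for all `k`. -/
def RapidDecay (a : ℕ → ℕ → ℂ) : Prop :=
  ∀ k : ℕ, ∃ C : ℝ, ∀ i j : ℕ, ((i : ℝ) + j) ^ k * ‖a i j‖ ≤ C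

/-- The infinite matrix product `(ab)_{ij} = ∑_l a_{il} b_{lj}`. -/
noncomputable def infMul (a b : ℕ → ℕ → ℂ) : ℕ → ℕ → ℂ :=
  fun i j => ∑' l : ℕ, a i l * b l j

/-- The group operation `a ∘ b = a + b + ab` on `Id + Ψ^{-∞}`. -/
noncomputable def circOp (a b : ℕ → ℕ → ℂ) : ℕ → ℕ → ℂ :=
  fun i j => a i j + b i j + infMul a b i j

lemma summable_inv_one_add_sq : Summable (fun l : ℕ => 1 / (1 + (l : ℝ) ^ 2)) := by
  have h1 : Summable (fun n : ℕ => 1 / ((n : ℝ) + 1) ^ 2) := by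
    have := (summable_nat_add_iff (f := fun n : ℕ => 1 / (n : ℝ) ^ 2) 1).mpr
      (Real.summable_one_div_nat_pow.mpr (by norm_num))
    simpa using this
  apply Summable.of_nonneg_of_le (fun l => by positivity) _ (h1.mul_left 2)
  intro l
  rw [div_le_iff₀ (by positivity)]
  have hl : ((l : ℝ) + 1) ^ 2 ≤ 2 * (1 + (l : ℝ) ^ 2) := by nlinarith [sq_nonneg ((l:ℝ) - 1)]
  calc (1 : ℝ) = ((l : ℝ) + 1)^2 / ((l : ℝ) + 1)^2 := by
        rw [div_self]; positivity
    _ ≤ 2 * (1 + (l:ℝ)^2) / ((l:ℝ)+1)^2 := div_le_div_of_nonneg_right hl (by positivity)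
    _ = 2 * (1 / ((l:ℝ)+1)^2) * (1 + (l:ℝ)^2) := by ring

/-- Decay in the second index. -/
lemma decay_snd {a : ℕ → ℕ → ℂ} (ha : RapidDecay a) (k : ℕ) :
    ∃ D : ℝ, 0 ≤ D ∧ ∀ i j : ℕ,
      ((i : ℝ) + j) ^ k * ‖a i j‖ ≤ D / (1 + (j : ℝ) ^ 2) := by
  obtain ⟨C0, h0⟩ := ha k
  obtain ⟨C2, h2⟩ := ha (k + 2)
  have hC0 : 0 ≤ C0 := le_trans (by positivity) (h0 0 0)
  have hC2 : 0 ≤ C2 := le_trans (by positivity) (h2 0 0)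
  refine ⟨C0 + C2, by positivity, fun i j => ?_⟩
  rw [le_div_iff₀ (by positivity)]
  have key : ((i : ℝ) + j) ^ k * ‖a i j‖ * (1 + (j : ℝ) ^ 2)
      = ((i : ℝ) + j) ^ k * ‖a i j‖
        + (j : ℝ) ^ 2 * (((i : ℝ) + j) ^ k * ‖a i j‖) := by ring
  rw [key]
  have hj2 : (j : ℝ) ^ 2 * (((i : ℝ) + j) ^ k * ‖a i j‖) ≤ C2 := by
    have h1 : (j : ℝ) ^ 2 * (((i : ℝ) + j) ^ k * ‖a i j‖)
        ≤ ((i : ℝ) + j) ^ 2 * (((i : ℝ) + j) ^ k * ‖a i j‖) := by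
      apply mul_le_mul_of_nonneg_right _ (by positivity)
      apply pow_le_pow_left₀ (by positivity)
      have hi : (0:ℝ) ≤ (i:ℝ) := Nat.cast_nonneg i
      linarith
    refine h1.trans ?_
    calc ((i : ℝ) + j) ^ 2 * (((i : ℝ) + j) ^ k * ‖a i j‖)
        = ((i : ℝ) + j) ^ (k + 2) * ‖a i j‖ := by ring
      _ ≤ C2 := h2 i j
  linarith [h0 i j]

/-- Decay in the first index (k = 0 case). -/
lemma decay_fst {a : ℕ → ℕ → ℂ} (ha : RapidDecay a) :
    ∃ D : ℝ, 0 ≤ D ∧ ∀ i j : ℕ, ‖a i j‖ ≤ D / (1 + (i : ℝ) ^ 2) := by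
  obtain ⟨C0, h0⟩ := ha 0
  obtain ⟨C2, h2⟩ := ha 2
  have hC0 : 0 ≤ C0 := le_trans (by positivity) (h0 0 0)
  have hC2 : 0 ≤ C2 := le_trans (by positivity) (h2 0 0)
  refine ⟨C0 + C2, by positivity, fun i j => ?_⟩
  rw [le_div_iff₀ (by positivity)]
  have key : ‖a i j‖ * (1 + (i : ℝ) ^ 2)
      = ‖a i j‖ + (i : ℝ) ^ 2 * ‖a i j‖ := by ring
  rw [key]
  have hi2 : (i : ℝ) ^ 2 * ‖a i j‖ ≤ C2 := by
    have h1 : (i : ℝ) ^ 2 * ‖a i j‖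
        ≤ ((i : ℝ) + j) ^ 2 * ‖a i j‖ := by
      apply mul_le_mul_of_nonneg_right _ (by positivity)
      apply pow_le_pow_left₀ (by positivity)
      have hj : (0:ℝ) ≤ (j:ℝ) := Nat.cast_nonneg j
      linarith
    exact h1.trans (h2 i j)
  have h0' := h0 i j
  simp only [pow_zero, one_mul] at h0'
  linarith

/-- Uniform bound (k = 0 case). -/
lemma abs_le_c0 {a : ℕ → ℕ → ℂ} (ha : RapidDecay a) :
    ∃ C : ℝ, 0 ≤ C ∧ ∀ i j : ℕ, ‖a i j‖ ≤ C := by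
  obtain ⟨C0, h0⟩ := ha 0
  have h00 : ‖a 0 0‖ ≤ C0 := by simpa using h0 0 0
  refine ⟨C0, le_trans (norm_nonneg _) h00, fun i j => by simpa using h0 i j⟩

/-- Bound of the form `(l+j)^k |b l j| ≤ C`. -/
lemma pow_abs_le {b : ℕ → ℕ → ℂ} (hb : RapidDecay b) (k : ℕ) :
    ∃ C : ℝ, 0 ≤ C ∧ ∀ l j : ℕ, ((l : ℝ) + j) ^ k * ‖b l j‖ ≤ C := by
  obtain ⟨C, hC⟩ := hb k
  exact ⟨C, le_trans (by positivity) (hC 0 0), hC⟩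

lemma summable_norm_inf {a b : ℕ → ℕ → ℂ} (ha : RapidDecay a) (hb : RapidDecay b)
    (i j : ℕ) : Summable fun l : ℕ => ‖a i l * b l j‖ := by
  obtain ⟨Da, hDa, hda⟩ := decay_snd ha 0
  obtain ⟨Cb, hCb, hcb⟩ := abs_le_c0 hb
  apply Summable.of_nonneg_of_le (fun l => norm_nonneg _)
    (f := fun l : ℕ => Da * Cb * (1 / (1 + (l : ℝ) ^ 2)))
  · intro l
    rw [norm_mul]
    have h1 : ‖a i l‖ ≤ Da / (1 + (l : ℝ) ^ 2) := by
      have := hda i l; simpa using this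
    have h2 : ‖b l j‖ ≤ Cb := hcb l j
    calc ‖a i l‖ * ‖b l j‖ ≤ (Da / (1 + (l : ℝ) ^ 2)) * Cb :=
          mul_le_mul h1 h2 (norm_nonneg _) (by positivity)
      _ = Da * Cb * (1 / (1 + (l : ℝ) ^ 2)) := by ring
  · exact summable_inv_one_add_sq.mul_left _

lemma summable_inf {a b : ℕ → ℕ → ℂ} (ha : RapidDecay a) (hb : RapidDecay b)
    (i j : ℕ) : Summable fun l : ℕ => a i l * b l j :=
  Summable.of_norm (summable_norm_inf ha hb i j)

/-- key pointwise bound used for rapid decay of the product. -/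
lemma rd_infMul {a b : ℕ → ℕ → ℂ} (ha : RapidDecay a) (hb : RapidDecay b) :
    RapidDecay (infMul a b) := by
  intro k
  obtain ⟨Da, hDa, hda⟩ := decay_snd ha k
  obtain ⟨Da0, hDa0, hda0⟩ := decay_snd ha 0
  obtain ⟨Cb0, hCb0, hcb0⟩ := abs_le_c0 hb
  obtain ⟨Cbk, hCbk, hcbk⟩ := pow_abs_le hb k
  set E : ℝ := 2 ^ k * (Da * Cb0 + Da0 * Cbk) with hE
  have hE0 : 0 ≤ E := by positivity
  refine ⟨E * ∑' l : ℕ, 1 / (1 + (l : ℝ) ^ 2), fun i j => ?_⟩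
  -- pointwise bound on (i+j)^k ‖a i l * b l j‖
  have hpt : ∀ l : ℕ, ((i : ℝ) + j) ^ k * ‖a i l * b l j‖
      ≤ E * (1 / (1 + (l : ℝ) ^ 2)) := by
    intro l
    have hij : ((i : ℝ) + j) ^ k ≤ 2 ^ k * (((i : ℝ) + l) ^ k + ((l : ℝ) + j) ^ k) := by
      have h1 : ((i : ℝ) + j) ≤ ((i : ℝ) + l) + ((l : ℝ) + j) := by
        have : (0 : ℝ) ≤ 2 * l := by positivity
        linarith
      have h2 : ((i : ℝ) + j) ^ k ≤ (((i : ℝ) + l) + ((l : ℝ) + j)) ^ k :=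
        pow_le_pow_left₀ (by positivity) h1 k
      refine h2.trans ?_
      refine (add_pow_le (by positivity) (by positivity) k).trans ?_
      apply mul_le_mul_of_nonneg_right _ (by positivity)
      exact pow_le_pow_right₀ (by norm_num) (Nat.sub_le k 1)
    have hnorm : ‖a i l * b l j‖ = ‖a i l‖ * ‖b l j‖ := by
      rw [norm_mul]
    have hterm1 : ((i : ℝ) + l) ^ k * (‖a i l‖ * ‖b l j‖)
        ≤ (Da / (1 + (l : ℝ) ^ 2)) * Cb0 := by
      rw [← mul_assoc]
      exact mul_le_mul (hda i l) (hcb0 l j) (by positivity) (by positivity)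
    have hterm2 : ((l : ℝ) + j) ^ k * (‖a i l‖ * ‖b l j‖)
        ≤ (Da0 / (1 + (l : ℝ) ^ 2)) * Cbk := by
      have : ((l : ℝ) + j) ^ k * (‖a i l‖ * ‖b l j‖)
          = ‖a i l‖ * (((l : ℝ) + j) ^ k * ‖b l j‖) := by ring
      rw [this]
      have ha0 : ‖a i l‖ ≤ Da0 / (1 + (l : ℝ) ^ 2) := by
        have := hda0 i l; simpa using this
      exact mul_le_mul ha0 (hcbk l j) (by positivity) (by positivity)
    calc ((i : ℝ) + j) ^ k * ‖a i l * b l j‖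
        ≤ (2 ^ k * (((i : ℝ) + l) ^ k + ((l : ℝ) + j) ^ k)) * ‖a i l * b l j‖ :=
          mul_le_mul_of_nonneg_right hij (norm_nonneg _)
      _ = 2 ^ k * (((i : ℝ) + l) ^ k * (‖a i l‖ * ‖b l j‖)
            + ((l : ℝ) + j) ^ k * (‖a i l‖ * ‖b l j‖)) := by
          rw [hnorm]; ring
      _ ≤ 2 ^ k * ((Da / (1 + (l : ℝ) ^ 2)) * Cb0 + (Da0 / (1 + (l : ℝ) ^ 2)) * Cbk) := by
          apply mul_le_mul_of_nonneg_left (add_le_add hterm1 hterm2) (by positivity)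
      _ = E * (1 / (1 + (l : ℝ) ^ 2)) := by rw [hE]; field_simp
  have hsumm := summable_norm_inf ha hb i j
  have h1 : ‖infMul a b i j‖ ≤ ∑' l : ℕ, ‖a i l * b l j‖ := by
    have := norm_tsum_le_tsum_norm hsumm
    simpa [infMul] using this
  calc ((i : ℝ) + j) ^ k * ‖infMul a b i j‖
      ≤ ((i : ℝ) + j) ^ k * ∑' l : ℕ, ‖a i l * b l j‖ :=
        mul_le_mul_of_nonneg_left h1 (by positivity)
    _ = ∑' l : ℕ, ((i : ℝ) + j) ^ k * ‖a i l * b l j‖ := (tsum_mul_left).symm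
    _ ≤ ∑' l : ℕ, E * (1 / (1 + (l : ℝ) ^ 2)) := by
        apply Summable.tsum_le_tsum hpt (hsumm.mul_left _) (summable_inv_one_add_sq.mul_left E)
    _ = E * ∑' l : ℕ, 1 / (1 + (l : ℝ) ^ 2) := tsum_mul_left

lemma rd_circOp {a b : ℕ → ℕ → ℂ} (ha : RapidDecay a) (hb : RapidDecay b) :
    RapidDecay (circOp a b) := by
  intro k
  obtain ⟨Ca, hCa⟩ := ha k
  obtain ⟨Cb, hCb⟩ := hb k
  obtain ⟨Cm, hCm⟩ := rd_infMul ha hb k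
  refine ⟨Ca + Cb + Cm, fun i j => ?_⟩
  have h : ‖circOp a b i j‖
      ≤ ‖a i j‖ + ‖b i j‖ + ‖infMul a b i j‖ := by
    simp only [circOp]
    exact le_trans (norm_add_le _ _)
      (add_le_add_left (norm_add_le _ _) _)
  calc ((i : ℝ) + j) ^ k * ‖circOp a b i j‖
      ≤ ((i : ℝ) + j) ^ k * (‖a i j‖ + ‖b i j‖
          + ‖infMul a b i j‖) := mul_le_mul_of_nonneg_left h (by positivity)
    _ = ((i : ℝ) + j) ^ k * ‖a i j‖ + ((i : ℝ) + j) ^ k * ‖b i j‖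
          + ((i : ℝ) + j) ^ k * ‖infMul a b i j‖ := by ring
    _ ≤ Ca + Cb + Cm := add_le_add (add_le_add (hCa i j) (hCb i j)) (hCm i j)

/-- Associativity of the matrix product. -/
lemma infMul_assoc {a b c : ℕ → ℕ → ℂ} (ha : RapidDecay a) (hb : RapidDecay b)
    (hc : RapidDecay c) : infMul (infMul a b) c = infMul a (infMul b c) := by
  funext i j
  obtain ⟨Da, hDa, hda⟩ := decay_snd ha 0
  obtain ⟨Cb, hCb, hcb⟩ := abs_le_c0 hb
  obtain ⟨Dc, hDc, hdc⟩ := decay_fst hc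
  -- summability of the double family
  have hsum2 : Summable (Function.uncurry fun m l : ℕ => a i m * (b m l * c l j)) := by
    apply Summable.of_norm
    apply Summable.of_nonneg_of_le (fun p => norm_nonneg _)
      (f := fun p : ℕ × ℕ =>
        (Da * Cb * (1 / (1 + (p.1 : ℝ) ^ 2))) * (Dc * (1 / (1 + (p.2 : ℝ) ^ 2))))
    · rintro ⟨m, l⟩
      simp only [Function.uncurry]
      rw [norm_mul, norm_mul]
      have h1 : ‖a i m‖ ≤ Da / (1 + (m : ℝ) ^ 2) := by
        have := hda i m; simpa using this
      have h2 : ‖b m l‖ ≤ Cb := hcb m l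
      have h3 : ‖c l j‖ ≤ Dc / (1 + (l : ℝ) ^ 2) := hdc l j
      have h4 : ‖b m l‖ * ‖c l j‖ ≤ Cb * (Dc / (1 + (l : ℝ) ^ 2)) :=
        mul_le_mul h2 h3 (norm_nonneg _) hCb
      have h5 : (0:ℝ) ≤ ‖b m l‖ * ‖c l j‖ := by positivity
      have h6 : (0:ℝ) ≤ Da / (1 + (m : ℝ) ^ 2) := by positivity
      calc ‖a i m‖ * (‖b m l‖ * ‖c l j‖)
          ≤ (Da / (1 + (m : ℝ) ^ 2)) * (Cb * (Dc / (1 + (l : ℝ) ^ 2))) :=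
            mul_le_mul h1 h4 h5 h6
        _ = (Da * Cb * (1 / (1 + (m : ℝ) ^ 2))) * (Dc * (1 / (1 + (l : ℝ) ^ 2))) := by
            field_simp
    · exact (summable_inv_one_add_sq.mul_left (Da * Cb)).mul_of_nonneg
        (summable_inv_one_add_sq.mul_left Dc)
        (fun m => by positivity) (fun l => by positivity)
  have key : ∑' (l : ℕ) (m : ℕ), a i m * (b m l * c l j)
      = ∑' (m : ℕ) (l : ℕ), a i m * (b m l * c l j) :=
    Summable.tsum_comm hsum2
  have lhs : infMul (infMul a b) c i j = ∑' (l : ℕ) (m : ℕ), a i m * (b m l * c l j) := by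
    simp only [infMul]
    congr 1
    funext l
    rw [← tsum_mul_right]
    congr 1
    funext m
    ring
  have rhs : infMul a (infMul b c) i j = ∑' (m : ℕ) (l : ℕ), a i m * (b m l * c l j) := by
    simp only [infMul]
    congr 1
    funext m
    rw [← tsum_mul_left]
  rw [lhs, key, ← rhs]

/-- Right distributivity pointwise. -/
lemma infMul_add_left {a b c : ℕ → ℕ → ℂ}
    (h1 : ∀ i j, Summable fun l => a i l * c l j)
    (h2 : ∀ i j, Summable fun l => b i l * c l j) :
    infMul (fun i j => a i j + b i j) c = fun i j => infMul a c i j + infMul b c i j := by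
  funext i j
  simp only [infMul]
  rw [← Summable.tsum_add (h1 i j) (h2 i j)]
  congr 1
  funext l
  ring

lemma infMul_add_right {a b c : ℕ → ℕ → ℂ}
    (h1 : ∀ i j, Summable fun l => a i l * b l j)
    (h2 : ∀ i j, Summable fun l => a i l * c l j) :
    infMul a (fun i j => b i j + c i j) = fun i j => infMul a b i j + infMul a c i j := by
  funext i j
  simp only [infMul]
  rw [← Summable.tsum_add (h1 i j) (h2 i j)]
  congr 1
  funext l
  ring

/-- On rapidly decaying infinite matrices the operation `a ∘ b = a + b + ab`
is well defined (the matrix product series converges absolutely and the result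
decays rapidly) and associative. -/
theorem stmt_2 (a b c : ℕ → ℕ → ℂ)
    (ha : RapidDecay a) (hb : RapidDecay b) (hc : RapidDecay c) :
    (∀ i j : ℕ, Summable fun l : ℕ => ‖a i l * b l j‖) ∧
    RapidDecay (circOp a b) ∧
    circOp (circOp a b) c = circOp a (circOp b c) := by
  refine ⟨summable_norm_inf ha hb, rd_circOp ha hb, ?_⟩
  have hab : RapidDecay (infMul a b) := rd_infMul ha hb
  have hbc : RapidDecay (infMul b c) := rd_infMul hb hc
  have hcircab : RapidDecay (circOp a b) := rd_circOp ha hb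
  have hcircbc : RapidDecay (circOp b c) := rd_circOp hb hc
  funext i j
  have e1 : infMul (circOp a b) c i j
      = infMul a c i j + infMul b c i j + infMul (infMul a b) c i j := by
    have step1 : infMul (circOp a b) c
        = fun i j => infMul (fun i j => a i j + b i j) c i j + infMul (infMul a b) c i j := by
      have := infMul_add_left (a := fun i j => a i j + b i j) (b := infMul a b) (c := c)
        (fun i j => by
          have : Summable fun l => (a i l + b i l) * c l j := by
            have s1 := summable_inf ha hc i j
            have s2 := summable_inf hb hc i j
            have := s1.add s2
            apply this.congr
            intro l; ring
          exact this)
        (summable_inf hab hc)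
      have hfun : (fun i j => a i j + b i j + infMul a b i j)
          = (fun i j => (fun i j => a i j + b i j) i j + infMul a b i j) := rfl
      calc infMul (circOp a b) c
          = infMul (fun i j => (a i j + b i j) + infMul a b i j) c := rfl
        _ = _ := this
    have step2 : infMul (fun i j => a i j + b i j) c i j
        = infMul a c i j + infMul b c i j := by
      rw [infMul_add_left (summable_inf ha hc) (summable_inf hb hc)]
    rw [congrFun (congrFun step1 i) j, step2]
  have e2 : infMul a (circOp b c) i j
      = infMul a b i j + infMul a c i j + infMul a (infMul b c) i j := by
    have step1 : infMul a (circOp b c)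
        = fun i j => infMul a (fun i j => b i j + c i j) i j + infMul a (infMul b c) i j := by
      have := infMul_add_right (a := a) (b := fun i j => b i j + c i j) (c := infMul b c)
        (fun i j => by
          have : Summable fun l => a i l * (b l j + c l j) := by
            have s1 := summable_inf ha hb i j
            have s2 := summable_inf ha hc i j
            have := s1.add s2
            apply this.congr
            intro l; ring
          exact this)
        (summable_inf ha hbc)
      exact this
    have step2 : infMul a (fun i j => b i j + c i j) i j
        = infMul a b i j + infMul a c i j := by
      rw [infMul_add_right (summable_inf ha hb) (summable_inf ha hc)]
    rw [congrFun (congrFun step1 i) j, step2]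
  have e3 : infMul (infMul a b) c i j = infMul a (infMul b c) i j := by
    rw [infMul_assoc ha hb hc]
  simp only [circOp] at *
  rw [e1, e2, e3]
  ring
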